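/- Let H be a bialgebra and g₀, g₁, …, gₙ group-like elements of H with g₀ = gₙ = 1_H. Suppose x₁, …, xₙ ∈ H with each xᵢ a (gᵢ₋₁, gᵢ)-primitive: Δxᵢ = gᵢ₋₁ ⊗ xᵢ + xᵢ ⊗ gᵢ. Then ω = x₁ ⊗ ⋯ ⊗ xₙ ∈ V^⊗n (V = Ker ε) is a cycle for the cobar differential: Σᵢ₌₁ⁿ (−1)^{i+1} x₁ ⊗ ⋯ ⊗ Δ'(xᵢ) ⊗ ⋯ ⊗ xₙ = 0, where Δ'(xᵢ) = u_{gᵢ₋₁} ⊗ xᵢ + xᵢ ⊗ u_{gᵢ} and u_g = g − 1_H. (The sum telescopes, and u_{g₀} = u_{gₙ} = 0.) -/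

import Mathlib

open TensorProduct

universe u

variable (k H : Type u) [Field k] [Ring H] [Bialgebra k H]

/-- The iterated tensor powers `H^{⊗n}` (padded by `k` on the right), as modules. -/
noncomputable def Tb : ℕ → ModuleCat.{u} k
  | 0 => ModuleCat.of k k
  | n + 1 => ModuleCat.of k (H ⊗[k] (Tb n))

/-- The cobar differential extending `Δ'` with Koszul signs, recursively
`d = (Δ' ⊗ id) − (id ⊗ d)`; this is `Σᵢ (−1)^{i+1} (apply Δ' in the i-th slot)`. -/
noncomputable def dcobar (Δ' : H →ₗ[k] H ⊗[k] H) :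
    ∀ n, (Tb k H n : Type u) →ₗ[k] (Tb k H (n + 1) : Type u)
  | 0 => 0
  | n + 1 =>
      ((TensorProduct.assoc k H H (Tb k H n)).toLinearMap
        ∘ₗ TensorProduct.map Δ' LinearMap.id)
      - TensorProduct.map LinearMap.id (dcobar Δ' n)

/-- The reduced comultiplication `Δ'(v) = Δ(v) − 1 ⊗ v − v ⊗ 1`. -/
noncomputable def ΔredH : H →ₗ[k] H ⊗[k] H :=
  Coalgebra.comul - TensorProduct.mk k H H 1 - (TensorProduct.mk k H H).flip 1

/-- The pure tensor `x₁ ⊗ ⋯ ⊗ xₙ` in `H^{⊗n}` (padded). -/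
noncomputable def elt : ∀ n, (Fin n → H) → (Tb k H n : Type u)
  | 0, _ => (1 : k)
  | n + 1, x => x 0 ⊗ₜ[k] elt n (fun i => x i.succ)

lemma ΔredH_apply (x a b : H)
    (h : Coalgebra.comul (R := k) x = a ⊗ₜ[k] x + x ⊗ₜ[k] b) :
    ΔredH k H x = (a - 1) ⊗ₜ[k] x + x ⊗ₜ[k] (b - 1) := by
  simp only [ΔredH, LinearMap.sub_apply, h, TensorProduct.mk_apply,
    LinearMap.flip_apply, TensorProduct.sub_tmul, TensorProduct.tmul_sub]
  abel

/-- Identity, recasting `Tb (n+1)` as `H ⊗ Tb n`. -/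
noncomputable def tb1 (n : ℕ) :
    (Tb k H (n + 1) : Type u) →ₗ[k] H ⊗[k] (Tb k H n : Type u) := LinearMap.id

lemma snoc_comp_succ (n : ℕ) (x : Fin (n + 1) → H) (a : H) :
    (fun i : Fin (n + 1) => (Fin.snoc x a : Fin (n + 2) → H) i.succ)
      = (Fin.snoc (fun i : Fin n => x i.succ) a : Fin (n + 1) → H) := by
  funext i
  induction i using Fin.lastCases with
  | last => simp [Fin.succ_last]
  | cast j => simp [Fin.succ_castSucc, -Fin.castSucc_succ]

lemma dcobar_succ (Δ' : H →ₗ[k] H ⊗[k] H) (n : ℕ) (a : H) (t : (Tb k H n : Type u)) :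
    tb1 k H (n + 1) (dcobar k H Δ' (n + 1) (a ⊗ₜ[k] t))
      = (TensorProduct.assoc k H H (Tb k H n)) (Δ' a ⊗ₜ[k] t)
        - a ⊗ₜ[k] (tb1 k H n (dcobar k H Δ' n t)) := rfl

lemma key (n : ℕ) (g : Fin (n + 1) → H) (x : Fin n → H)
    (hx : ∀ i : Fin n, Coalgebra.comul (R := k) (x i)
      = g i.castSucc ⊗ₜ[k] x i + x i ⊗ₜ[k] g i.succ) :
    tb1 k H n (dcobar k H (ΔredH k H) n (elt k H n x))
      = (g 0 - 1) ⊗ₜ[k] elt k H n x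
        + ((-1 : k) ^ (n + 1))
            • tb1 k H n (elt k H (n + 1)
                (Fin.snoc x (g (Fin.last n) - 1) : Fin (n + 1) → H)) := by
  induction n with
  | zero =>
    have h1 : tb1 k H 0 (elt k H 1 (Fin.snoc x (g (Fin.last 0) - 1) : Fin 1 → H))
        = (g 0 - 1) ⊗ₜ[k] elt k H 0 x := by
      show (Fin.snoc x (g (Fin.last 0) - 1) : Fin 1 → H) 0 ⊗ₜ[k] elt k H 0 _ = _
      rw [show (0 : Fin 1) = Fin.last 0 from rfl, Fin.snoc_last]
      rfl
    have h0 : tb1 k H 0 (dcobar k H (ΔredH k H) 0 (elt k H 0 x)) = 0 := by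
      show tb1 k H 0 ((0 : (Tb k H 0 : Type u) →ₗ[k] (Tb k H 1 : Type u)) (elt k H 0 x)) = 0
      simp
    rw [h0, h1, pow_one]
    exact ((congrArg (_ + ·) (neg_one_smul k _)).trans (add_neg_cancel _)).symm
  | succ n ih =>
    set x' : Fin n → H := fun i => x i.succ with hx'def
    set g' : Fin (n + 1) → H := fun i => g i.succ with hg'def
    have hx' : ∀ i : Fin n, Coalgebra.comul (R := k) (x' i)
        = g' i.castSucc ⊗ₜ[k] x' i + x' i ⊗ₜ[k] g' i.succ := by
      intro i
      simpa [hx'def, hg'def, Fin.succ_castSucc, -Fin.castSucc_succ] using hx i.succ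
    have IH := ih g' x' hx'
    have hΔ : ΔredH k H (x 0)
        = (g 0 - 1) ⊗ₜ[k] x 0 + x 0 ⊗ₜ[k] (g' 0 - 1) := by
      have := ΔredH_apply k H (x 0) (g (Fin.castSucc 0)) (g (Fin.succ 0)) (hx 0)
      simpa [hg'def] using this
    have helt : elt k H (n + 1) x = x 0 ⊗ₜ[k] elt k H n x' := rfl
    have hsnoc : tb1 k H (n + 1)
          (elt k H (n + 2) (Fin.snoc x (g (Fin.last (n + 1)) - 1) : Fin (n + 2) → H))
        = x 0 ⊗ₜ[k] (tb1 k H n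
            (elt k H (n + 1) (Fin.snoc x' (g' (Fin.last n) - 1) : Fin (n + 1) → H))) := by
      have h0 : (Fin.snoc x (g (Fin.last (n+1)) - 1) : Fin (n+2) → H) 0 = x 0 := by
        rw [show (0 : Fin (n+2)) = Fin.castSucc (0 : Fin (n+1)) from rfl, Fin.snoc_castSucc]
      have hlast : g' (Fin.last n) = g (Fin.last (n + 1)) := by
        simp [hg'def, Fin.succ_last]
      show (Fin.snoc x (g (Fin.last (n+1)) - 1) : Fin (n+2) → H) 0
          ⊗ₜ[k] elt k H (n+1)
            (fun i => (Fin.snoc x (g (Fin.last (n+1)) - 1) : Fin (n+2) → H) i.succ) = _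
      rw [h0, snoc_comp_succ, hlast]
      rfl
    rw [helt, dcobar_succ, hΔ, TensorProduct.add_tmul, map_add, IH, hsnoc]
    simp only [TensorProduct.assoc_tmul, TensorProduct.tmul_add, TensorProduct.tmul_smul,
      pow_succ]
    have aux : ∀ (M : Type u) [AddCommGroup M] [Module k M] (A B C : M) (c : k),
        A + B - (B + (c * -1) • C) = A + (c * -1 * -1) • C := by
      intros; module
    exact aux _ _ _ _ _

lemma elt_snoc_zero (n : ℕ) (x : Fin n → H) :
    elt k H (n + 1) (Fin.snoc x (0 : H) : Fin (n + 1) → H) = 0 := by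
  induction n with
  | zero =>
    show (Fin.snoc x (0 : H) : Fin 1 → H) 0 ⊗ₜ[k] elt k H 0 _ = 0
    rw [show (0 : Fin 1) = Fin.last 0 from rfl, Fin.snoc_last, TensorProduct.zero_tmul]
  | succ n ih =>
    show (Fin.snoc x (0 : H) : Fin (n+2) → H) 0
        ⊗ₜ[k] elt k H (n+1) (fun i => (Fin.snoc x (0:H) : Fin (n+2) → H) i.succ) = 0
    rw [snoc_comp_succ, ih, TensorProduct.tmul_zero]

/-- if `g₀, …, gₙ` are group-like with `g₀ = gₙ = 1` and each `xᵢ` is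
`(gᵢ₋₁, gᵢ)`-primitive, then `ω = x₁ ⊗ ⋯ ⊗ xₙ` is a cycle for the cobar differential
(the sum `Σᵢ (−1)^{i+1} x₁ ⊗ ⋯ ⊗ Δ'(xᵢ) ⊗ ⋯ ⊗ xₙ` telescopes to zero). -/
theorem stmt16 (n : ℕ) (g : Fin (n + 1) → H) (x : Fin n → H)
    (hg : ∀ j, Coalgebra.comul (R := k) (g j) = g j ⊗ₜ[k] g j)
    (hεg : ∀ j, Coalgebra.counit (R := k) (g j) = (1 : k))
    (hg0 : g 0 = 1) (hgn : g (Fin.last n) = 1)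
    (hx : ∀ i : Fin n, Coalgebra.comul (R := k) (x i)
      = g i.castSucc ⊗ₜ[k] x i + x i ⊗ₜ[k] g i.succ) :
    dcobar k H (ΔredH k H) n (elt k H n x) = 0 := by
  have h := key k H n g x hx
  rw [hg0, hgn, sub_self, TensorProduct.zero_tmul] at h
  rw [elt_snoc_zero, map_zero, smul_zero, add_zero] at h
  exact h
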